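/- Let S ⊆ ℕ_0^d be a GNS, n ∈ S with n ≠ 0, and let ≺ be a monomial order on ℕ_0^d. Then S is almost symmetric of type t if and only if C(S,n) can be written as a disjoint union C(S,n) = {a_0 = 0 ≺ a_1 ≺ ⋯ ≺ a_m} ∪ {b_1 ≺ ⋯ ≺ b_{t−1}} (each list in ≺-increasing order) satisfying: (1) b_{t−1} ≺ a_m; (2) b_i − n ∈ ℕ_0^d for every i ∈ {1,…,t−1}; (3) b_i ≰_S b_j for all i ≠ j; (4) a_i + a_{m−i} = a_m for all i ∈ {0,1,…,m}; (5) b_j + b_{t−j} = a_m + n for all j ∈ {1,…,t−1}. -/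

import Mathlib

open scoped BigOperators

/-- A generalized numerical semigroup: a submonoid of `ℕ^d` with finite complement. -/
def IsGNS {d : ℕ} (S : Set (Fin d → ℕ)) : Prop :=
  (0 : Fin d → ℕ) ∈ S ∧ (∀ x y : Fin d → ℕ, x ∈ S → y ∈ S → x + y ∈ S) ∧ Sᶜ.Finite

/-- The genus: number of gaps. -/
noncomputable def genus {d : ℕ} (S : Set (Fin d → ℕ)) : ℕ := Sᶜ.ncard

/-- Pseudo-Frobenius elements. -/
def PF {d : ℕ} (S : Set (Fin d → ℕ)) : Set (Fin d → ℕ) :=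
  {h | h ∉ S ∧ ∀ s ∈ S, s ≠ 0 → h + s ∈ S}

/-- The type: number of pseudo-Frobenius elements. -/
noncomputable def typ {d : ℕ} (S : Set (Fin d → ℕ)) : ℕ := (PF S).ncard

/-- Maximal elements of a set with respect to a relation. -/
def Maximals {α : Type*} (le : α → α → Prop) (X : Set α) : Set α :=
  {x ∈ X | ∀ y ∈ X, le x y → x = y}

/-- `f` is the unique maximal element of the set of gaps w.r.t. the componentwise order. -/
def IsFrobenius {d : ℕ} (S : Set (Fin d → ℕ)) (f : Fin d → ℕ) : Prop :=
  Maximals (· ≤ ·) Sᶜ = {f}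

/-- Almost symmetric: `2 g(S) + 1 - t(S) = ∏ (h i + 1)` for some gap `h`. -/
def AlmostSymmetric {d : ℕ} (S : Set (Fin d → ℕ)) : Prop :=
  ∃ h ∉ S, 2 * genus S + 1 = typ S + ∏ i, (h i + 1)

/-- Special gaps. -/
def SG {d : ℕ} (S : Set (Fin d → ℕ)) : Set (Fin d → ℕ) :=
  {h ∈ PF S | h + h ∈ S}

/-- The partial order `≤_S` : `y ≤_S x` iff `x - y ∈ S`. -/
def leS {d : ℕ} (S : Set (Fin d → ℕ)) (x y : Fin d → ℕ) : Prop :=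
  ∃ s ∈ S, x + s = y

/-- The Apéry set of `S` with respect to `n`. -/
def Ap {d : ℕ} (S : Set (Fin d → ℕ)) (n : Fin d → ℕ) : Set (Fin d → ℕ) :=
  {s ∈ S | ¬ ∃ u ∈ S, u + n = s}

/-- The reduced Apéry set of `S` with respect to `n`. -/
def Cred {d : ℕ} (S : Set (Fin d → ℕ)) (n : Fin d → ℕ) : Set (Fin d → ℕ) :=
  {s ∈ Ap S n | ∃ h, h ∉ S ∧ s ≤ h + n}

/-- A monomial order on `ℕ^d` given by its strict-order relation. -/
def IsMonomialOrder (d : ℕ) (lt : (Fin d → ℕ) → (Fin d → ℕ) → Prop) : Prop :=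
  (∀ a, ¬ lt a a) ∧ (∀ a b c, lt a b → lt b c → lt a c) ∧
  (∀ a b, a ≠ b → lt a b ∨ lt b a) ∧
  (∀ u a b, lt a b → lt (a + u) (b + u)) ∧
  (∀ a, a ≠ (0 : Fin d → ℕ) → lt 0 a)

/-- Minimal generator of a GNS. -/
def IsMinGen {d : ℕ} (S : Set (Fin d → ℕ)) (x : Fin d → ℕ) : Prop :=
  x ∈ S ∧ x ≠ 0 ∧ ∀ y ∈ S, ∀ z ∈ S, y ≠ 0 → z ≠ 0 → y + z ≠ x

/-- Irreducible GNS: not an intersection of two GNSs properly containing it. -/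
def GNSIrreducible {d : ℕ} (S : Set (Fin d → ℕ)) : Prop :=
  ¬ ∃ S₁ S₂ : Set (Fin d → ℕ), IsGNS S₁ ∧ IsGNS S₂ ∧ S ⊂ S₁ ∧ S ⊂ S₂ ∧ S = S₁ ∩ S₂

/-- Pseudo-symmetric: `PF S = {f, f/2}`. -/
def PseudoSymmetric {d : ℕ} (S : Set (Fin d → ℕ)) : Prop :=
  ∃ f q : Fin d → ℕ, f ≠ q ∧ q + q = f ∧ PF S = {f, q}

section Aux
variable {d : ℕ}

/-- Boxes are finite. -/
lemma box_finite (v : Fin d → ℕ) : {x : Fin d → ℕ | x ≤ v}.Finite := by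
  have h : {x : Fin d → ℕ | x ≤ v} ⊆ Set.pi Set.univ (fun i => Set.Iic (v i)) := by
    intro x hx i _; exact hx i
  exact (Set.Finite.pi (fun i => Set.finite_Iic (v i))).subset h

lemma box_ncard (v : Fin d → ℕ) : {x : Fin d → ℕ | x ≤ v}.ncard = ∏ i, (v i + 1) := by
  have h1 : {x : Fin d → ℕ | x ≤ v} = Set.pi Set.univ (fun i => Set.Iic (v i)) := by
    ext x; simp [Set.mem_pi, Pi.le_def]
  rw [h1, ← Nat.card_coe_set_eq, Nat.card_congr (Equiv.Set.univPi _), Nat.card_pi]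
  refine Finset.prod_congr rfl fun i _ => ?_
  rw [Nat.card_coe_set_eq, ← Finset.coe_Iic, Set.ncard_coe_finset, Nat.card_Iic]

lemma sub_add_cancel_pi {x y : Fin d → ℕ} (h : x ≤ y) : y - x + x = y := by
  funext i; have h2 : x i ≤ y i := h i
  simp only [Pi.sub_apply, Pi.add_apply]; omega

section MO
variable {lt : (Fin d → ℕ) → (Fin d → ℕ) → Prop} (hlt : IsMonomialOrder d lt)
include hlt

lemma mo_asymm {x y : Fin d → ℕ} (h : lt x y) : ¬ lt y x :=
  fun h' => hlt.1 x (hlt.2.1 x y x h h')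

lemma mo_lt_of_le_ne {x y : Fin d → ℕ} (hle : x ≤ y) (hne : x ≠ y) : lt x y := by
  have h0 : y - x ≠ 0 := by
    intro h; apply hne; funext i
    have h1 := congrFun h i
    have h2 : x i ≤ y i := hle i
    simp only [Pi.sub_apply, Pi.zero_apply] at h1
    omega
  have h1 := hlt.2.2.2.1 x 0 (y - x) (hlt.2.2.2.2 _ h0)
  rw [zero_add, sub_add_cancel_pi hle] at h1; exact h1

/-- Reversal: if `x + x' = y + y'` then `lt x y → lt y' x'`. -/
lemma mo_rev {x y x' y' : Fin d → ℕ} (hx : x + x' = y + y') (h : lt x y) : lt y' x' := by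
  rcases eq_or_ne y' x' with he | hne
  · subst he
    exact absurd (add_right_cancel hx) (fun hxy => hlt.1 _ (hxy ▸ h))
  rcases hlt.2.2.1 y' x' hne with h' | h'
  · exact h'
  · exfalso
    have h1 : lt (x + x') (y + x') := hlt.2.2.2.1 x' x y h
    have h2 : lt (y + x') (y + y') := by
      have h3 := hlt.2.2.2.1 y x' y' h'
      rwa [add_comm x' y, add_comm y' y] at h3
    exact hlt.1 _ (hx ▸ hlt.2.1 _ _ _ h1 h2)

end MO
end Aux
section Sgrp
variable {d : ℕ} {S : Set (Fin d → ℕ)}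

lemma sum_pos_of_ne_zero {x : Fin d → ℕ} (hx : x ≠ 0) : 0 < ∑ i, x i := by
  rcases Nat.eq_zero_or_pos (∑ i, x i) with h | h
  · exact absurd (funext fun i => (Finset.sum_eq_zero_iff.mp h) i (Finset.mem_univ i)) hx
  · exact h

lemma eq_of_le_of_sum_le {x y : Fin d → ℕ} (hle : x ≤ y) (hs : ∑ i, y i ≤ ∑ i, x i) : x = y := by
  by_contra hne
  have hlt : ∑ i, x i < ∑ i, y i := by
    rcases (Function.ne_iff).mp hne with ⟨i, hi⟩
    exact Finset.sum_lt_sum (fun j _ => hle j) ⟨i, Finset.mem_univ i, lt_of_le_of_ne (hle i) hi⟩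
  omega

/-- Every gap is dominated (w.r.t. `≤_S`) by a pseudo-Frobenius element. -/
lemma exists_pf_above (hS : IsGNS S) {p : Fin d → ℕ} (hp : p ∉ S) :
    ∃ q ∈ PF S, ∃ s ∈ S, p + s = q := by
  set T : Set (Fin d → ℕ) := {q | q ∉ S ∧ ∃ s ∈ S, p + s = q} with hT
  have hTfin : T.Finite := hS.2.2.subset (fun q hq => hq.1)
  have hTne : T.Nonempty := ⟨p, hp, 0, hS.1, add_zero p⟩
  obtain ⟨q, hqT, hqmax⟩ := Set.Finite.exists_maximalFor (fun x => ∑ i, x i) T hTfin hTne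
  refine ⟨q, ⟨hqT.1, fun s hs hs0 => ?_⟩, hqT.2⟩
  by_contra hqs
  obtain ⟨s', hs', hps'⟩ := hqT.2
  have hmem : q + s ∈ T := ⟨hqs, s' + s, hS.2.1 _ _ hs' hs, by rw [← add_assoc, hps']⟩
  have hle : ∑ i, q i ≤ ∑ i, (q + s) i := by
    apply Finset.sum_le_sum; intro i _; simp only [Pi.add_apply]; omega
  have : ∑ i, (q + s) i ≤ ∑ i, q i := hqmax hmem hle
  have hpos := sum_pos_of_ne_zero hs0
  have hsum : ∑ i, (q + s) i = ∑ i, q i + ∑ i, s i := by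
    simp [Pi.add_apply, Finset.sum_add_distrib]
  omega

/-- Every gap lies below a maximal gap. -/
lemma exists_maxgap_above (hS : IsGNS S) {x : Fin d → ℕ} (hx : x ∉ S) :
    ∃ f, f ∉ S ∧ x ≤ f ∧ ∀ y, y ∉ S → f ≤ y → f = y := by
  set T : Set (Fin d → ℕ) := {q | q ∉ S ∧ x ≤ q} with hT
  have hTfin : T.Finite := hS.2.2.subset (fun q hq => hq.1)
  have hTne : T.Nonempty := ⟨x, hx, le_refl x⟩
  obtain ⟨q, hqT, hqmax⟩ := Set.Finite.exists_maximalFor (fun x => ∑ i, x i) T hTfin hTne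
  refine ⟨q, hqT.1, hqT.2, fun y hy hqy => ?_⟩
  have hymem : y ∈ T := ⟨hy, le_trans hqT.2 hqy⟩
  have hle : ∑ i, q i ≤ ∑ i, y i := Finset.sum_le_sum (fun i _ => hqy i)
  exact eq_of_le_of_sum_le hqy (hqmax hymem hle)

/-- Maximal gaps are pseudo-Frobenius. -/
lemma maxgap_mem_PF (hS : IsGNS S) {f : Fin d → ℕ} (hf : f ∉ S)
    (hmax : ∀ y, y ∉ S → f ≤ y → f = y) : f ∈ PF S := by
  refine ⟨hf, fun s hs hs0 => ?_⟩
  by_contra hfs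
  have h1 : f ≤ f + s := by intro i; simp only [Pi.add_apply]; omega
  have h2 := hmax _ hfs h1
  apply hs0; funext i
  have h3 := congrFun h2 i
  simp only [Pi.add_apply, Pi.zero_apply] at h3 ⊢
  omega

end Sgrp
section Count
variable {d : ℕ} {S : Set (Fin d → ℕ)}

lemma psub_le (f x : Fin d → ℕ) : f - x ≤ f := by
  intro i; simp only [Pi.sub_apply]; omega

lemma psub_psub {f x : Fin d → ℕ} (h : x ≤ f) : f - (f - x) = x := by
  funext i; have h2 : x i ≤ f i := h i
  simp only [Pi.sub_apply]; omega

lemma padd_psub {f x : Fin d → ℕ} (h : x ≤ f) : x + (f - x) = f := by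
  funext i; have h2 : x i ≤ f i := h i
  simp only [Pi.sub_apply, Pi.add_apply]; omega

lemma psub_eq_zero {f x : Fin d → ℕ} (h : x ≤ f) (h0 : f - x = 0) : x = f := by
  funext i; have h2 : x i ≤ f i := h i
  have h3 := congrFun h0 i
  simp only [Pi.sub_apply, Pi.zero_apply] at h3; omega

lemma count_key (hS : IsGNS S) {f : Fin d → ℕ} (hf : f ∉ S) :
    {x | x ≤ f ∧ x ∉ S}.ncard
      = {x | x ≤ f ∧ x ∈ S}.ncard + {x | x ≤ f ∧ x ∉ S ∧ f - x ∉ S}.ncard := by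
  set σ : (Fin d → ℕ) → (Fin d → ℕ) := fun x => f - x with hσ
  have hsplit : {x | x ≤ f ∧ x ∉ S} = σ '' {x | x ≤ f ∧ x ∈ S} ∪ {x | x ≤ f ∧ x ∉ S ∧ f - x ∉ S} := by
    ext y
    simp only [Set.mem_union, Set.mem_image, Set.mem_setOf_eq]
    constructor
    · rintro ⟨hy, hyS⟩
      by_cases hfy : f - y ∈ S
      · exact Or.inl ⟨f - y, ⟨psub_le f y, hfy⟩, psub_psub hy⟩
      · exact Or.inr ⟨hy, hyS, hfy⟩
    · rintro (⟨x, ⟨hx, hxS⟩, rfl⟩ | ⟨hy, hyS, _⟩)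
      · refine ⟨psub_le f x, fun hc => hf ?_⟩
        have := hS.2.1 _ _ hxS hc
        rwa [padd_psub hx] at this
      · exact ⟨hy, hyS⟩
  have hdisj : Disjoint (σ '' {x | x ≤ f ∧ x ∈ S}) {x | x ≤ f ∧ x ∉ S ∧ f - x ∉ S} := by
    rw [Set.disjoint_left]
    rintro y ⟨x, ⟨hx, hxS⟩, rfl⟩ ⟨_, _, hc⟩
    exact hc (by rwa [hσ, psub_psub hx])
  have hfinP : {x : Fin d → ℕ | x ≤ f ∧ x ∈ S}.Finite := (box_finite f).subset (fun x hx => hx.1)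
  have hfinB : {x : Fin d → ℕ | x ≤ f ∧ x ∉ S ∧ f - x ∉ S}.Finite := (box_finite f).subset (fun x hx => hx.1)
  have hinj : Set.InjOn σ {x | x ≤ f ∧ x ∈ S} := by
    intro x hx y hy hxy
    rw [← psub_psub hx.1, ← psub_psub hy.1]
    simp only [hσ] at hxy ⊢; rw [hxy]
  rw [hsplit, Set.ncard_union_eq hdisj (hfinP.image σ) hfinB, Set.ncard_image_of_injOn hinj]

lemma box_split (S : Set (Fin d → ℕ)) (f : Fin d → ℕ) :
    {x : Fin d → ℕ | x ≤ f}.ncard = {x | x ≤ f ∧ x ∈ S}.ncard + {x | x ≤ f ∧ x ∉ S}.ncard := by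
  have h1 : {x : Fin d → ℕ | x ≤ f} = {x | x ≤ f ∧ x ∈ S} ∪ {x | x ≤ f ∧ x ∉ S} := by
    ext x; by_cases hx : x ∈ S <;> simp [hx]
  have hdisj : Disjoint {x : Fin d → ℕ | x ≤ f ∧ x ∈ S} {x | x ≤ f ∧ x ∉ S} := by
    rw [Set.disjoint_left]; rintro x ⟨_, hx⟩ ⟨_, hx'⟩; exact hx' hx
  rw [h1, Set.ncard_union_eq hdisj ((box_finite f).subset (fun x hx => hx.1))
    ((box_finite f).subset (fun x hx => hx.1))]

lemma genus_split (hS : IsGNS S) (f : Fin d → ℕ) :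
    genus S = {x | x ≤ f ∧ x ∉ S}.ncard + {x | x ∉ S ∧ ¬ x ≤ f}.ncard := by
  have h1 : Sᶜ = {x | x ≤ f ∧ x ∉ S} ∪ {x | x ∉ S ∧ ¬ x ≤ f} := by
    ext x; by_cases hx : x ≤ f <;> simp [hx, Set.mem_compl_iff]
  have hdisj : Disjoint {x : Fin d → ℕ | x ≤ f ∧ x ∉ S} {x | x ∉ S ∧ ¬ x ≤ f} := by
    rw [Set.disjoint_left]; rintro x ⟨hx, _⟩ ⟨_, hx'⟩; exact hx' hx
  rw [genus, h1, Set.ncard_union_eq hdisj ((box_finite f).subset (fun x hx => hx.1))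
    (hS.2.2.subset (fun x hx => hx.1))]

lemma PF_subset_three (hS : IsGNS S) {f : Fin d → ℕ} (hf : f ∉ S) :
    PF S ⊆ ({x | x ≤ f ∧ x ∉ S ∧ f - x ∉ S} ∪ {x | x ∉ S ∧ ¬ x ≤ f}) ∪ {f} := by
  intro p hp
  by_cases hpf : p ≤ f
  · by_cases hpe : p = f
    · exact Or.inr hpe
    · left; left
      refine ⟨hpf, hp.1, fun hc => ?_⟩
      have h0 : f - p ≠ 0 := fun h => hpe (psub_eq_zero hpf h)
      have := hp.2 _ hc h0
      rw [padd_psub hpf] at this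
      exact hf this
  · exact Or.inl (Or.inr ⟨hp.1, hpf⟩)

lemma PF_finite (hS : IsGNS S) : (PF S).Finite := hS.2.2.subset (fun x hx => hx.1)

/-- Structure of an almost symmetric GNS (Nari-type conditions). -/
lemma as_char_forward (hS : IsGNS S) (hAS : AlmostSymmetric S) :
    ∃ f, f ∉ S ∧ (∀ x, x ∉ S → x ≤ f) ∧ PF S = {x | x ∉ S ∧ f - x ∉ S} ∪ {f} := by
  obtain ⟨f, hf, heq⟩ := hAS
  have hkey := count_key hS hf
  have hbox := box_split S f
  have hgen := genus_split hS f
  have hprod := box_ncard f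
  have hfin3 : (({x | x ≤ f ∧ x ∉ S ∧ f - x ∉ S} ∪ {x | x ∉ S ∧ ¬ x ≤ f}) ∪ {f} : Set (Fin d → ℕ)).Finite :=
    (((box_finite f).subset (fun x hx => hx.1)).union (hS.2.2.subset (fun x hx => hx.1))).union
      (Set.finite_singleton f)
  have htle : typ S ≤ {x | x ≤ f ∧ x ∉ S ∧ f - x ∉ S}.ncard + {x | x ∉ S ∧ ¬ x ≤ f}.ncard + 1 := by
    calc typ S ≤ (({x | x ≤ f ∧ x ∉ S ∧ f - x ∉ S} ∪ {x | x ∉ S ∧ ¬ x ≤ f}) ∪ {f}).ncard :=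
          Set.ncard_le_ncard (PF_subset_three hS hf) hfin3
      _ ≤ ({x | x ≤ f ∧ x ∉ S ∧ f - x ∉ S} ∪ {x | x ∉ S ∧ ¬ x ≤ f}).ncard + ({f} : Set (Fin d → ℕ)).ncard :=
          Set.ncard_union_le _ _
      _ ≤ _ := by
          have := Set.ncard_union_le {x : Fin d → ℕ | x ≤ f ∧ x ∉ S ∧ f - x ∉ S} {x | x ∉ S ∧ ¬ x ≤ f}
          simp only [Set.ncard_singleton]
          omega
  rw [hprod] at hbox
  have hC0 : {x : Fin d → ℕ | x ∉ S ∧ ¬ x ≤ f}.ncard = 0 := by omega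
  have htB : typ S = {x | x ≤ f ∧ x ∉ S ∧ f - x ∉ S}.ncard + 1 := by omega
  have hCempty : {x : Fin d → ℕ | x ∉ S ∧ ¬ x ≤ f} = ∅ :=
    ((Set.ncard_eq_zero (hS.2.2.subset (fun x hx => hx.1))).mp hC0)
  have hall : ∀ x, x ∉ S → x ≤ f := by
    intro x hx
    by_contra hc
    exact absurd (Set.eq_empty_iff_forall_notMem.mp hCempty x) (by simp [hx, hc])
  have hfB : f ∉ {x : Fin d → ℕ | x ≤ f ∧ x ∉ S ∧ f - x ∉ S} := by
    intro hc
    exact hc.2.2 (by simpa using hS.1)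
  have hsub2 : PF S ⊆ {x | x ≤ f ∧ x ∉ S ∧ f - x ∉ S} ∪ {f} := by
    intro p hp
    rcases PF_subset_three hS hf hp with (h | h) | h
    · exact Or.inl h
    · exact absurd (Set.eq_empty_iff_forall_notMem.mp hCempty p) (by simp [h.1, h.2])
    · exact Or.inr h
  have hncard2 : ({x | x ≤ f ∧ x ∉ S ∧ f - x ∉ S} ∪ {f} : Set (Fin d → ℕ)).ncard
      = {x | x ≤ f ∧ x ∉ S ∧ f - x ∉ S}.ncard + 1 := by
    rw [Set.union_singleton, Set.ncard_insert_of_notMem hfB ((box_finite f).subset (fun x hx => hx.1))]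
  have hPFeq : PF S = {x | x ≤ f ∧ x ∉ S ∧ f - x ∉ S} ∪ {f} := by
    apply Set.eq_of_subset_of_ncard_le hsub2 _
      (((box_finite f).subset (fun x hx => hx.1)).union (Set.finite_singleton f))
    rw [hncard2, ← htB]; exact le_rfl
  refine ⟨f, hf, hall, ?_⟩
  rw [hPFeq]
  congr 1
  ext x
  simp only [Set.mem_setOf_eq]
  exact ⟨fun h => ⟨h.2.1, h.2.2⟩, fun h => ⟨hall x h.1, h.1, h.2⟩⟩

/-- Converse counting: Nari conditions give the almost symmetry count. -/
lemma as_char_backward (hS : IsGNS S) {f : Fin d → ℕ} (hf : f ∉ S)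
    (hall : ∀ x, x ∉ S → x ≤ f)
    (hPF : PF S = {x | x ∉ S ∧ f - x ∉ S} ∪ {f}) :
    2 * genus S + 1 = typ S + ∏ i, (f i + 1) := by
  have hkey := count_key hS hf
  have hbox := box_split S f
  have hgen := genus_split hS f
  have hprod := box_ncard f
  have hCempty : {x : Fin d → ℕ | x ∉ S ∧ ¬ x ≤ f}.ncard = 0 := by
    rw [Set.ncard_eq_zero (hS.2.2.subset (fun x hx => hx.1))]
    ext x; simp only [Set.mem_setOf_eq, Set.mem_empty_iff_false, iff_false, not_and, not_not]
    intro hx; exact hall x hx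
  have hBeq : {x : Fin d → ℕ | x ∉ S ∧ f - x ∉ S} = {x | x ≤ f ∧ x ∉ S ∧ f - x ∉ S} := by
    ext x; simp only [Set.mem_setOf_eq]
    exact ⟨fun h => ⟨hall x h.1, h.1, h.2⟩, fun h => ⟨h.2.1, h.2.2⟩⟩
  have hfB : f ∉ {x : Fin d → ℕ | x ≤ f ∧ x ∉ S ∧ f - x ∉ S} := by
    intro hc
    exact hc.2.2 (by simpa using hS.1)
  have htyp : typ S = {x | x ≤ f ∧ x ∉ S ∧ f - x ∉ S}.ncard + 1 := by
    rw [typ, hPF, hBeq, Set.union_singleton,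
      Set.ncard_insert_of_notMem hfB ((box_finite f).subset (fun x hx => hx.1))]
  rw [hprod] at hbox
  omega

end Count
section Apery
variable {d : ℕ} {S : Set (Fin d → ℕ)} {n : Fin d → ℕ}

lemma pf_add_mem_Ap (hn : n ∈ S) (hn0 : n ≠ 0) {p : Fin d → ℕ} (hp : p ∈ PF S) :
    p + n ∈ Ap S n := by
  refine ⟨hp.2 n hn hn0, ?_⟩
  rintro ⟨u, hu, he⟩
  exact hp.1 (add_right_cancel he ▸ hu)

lemma pf_add_mem_Cred (hn : n ∈ S) (hn0 : n ≠ 0) {p : Fin d → ℕ} (hp : p ∈ PF S) :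
    p + n ∈ Cred S n :=
  ⟨pf_add_mem_Ap hn hn0 hp, p, hp.1, le_refl _⟩

lemma n_not_mem_Ap (hS : IsGNS S) : n ∉ Ap S n := fun h => h.2 ⟨0, hS.1, zero_add n⟩

lemma zero_mem_Ap (hS : IsGNS S) (hn0 : n ≠ 0) : (0 : Fin d → ℕ) ∈ Ap S n := by
  refine ⟨hS.1, ?_⟩
  rintro ⟨u, hu, he⟩
  apply hn0
  funext i
  have := congrFun he i
  simp only [Pi.add_apply, Pi.zero_apply] at this ⊢
  omega

lemma le_of_add_eq {x y c : Fin d → ℕ} (h : x + y = c) : x ≤ c := by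
  intro i
  show x i ≤ c i
  have h2 := congrFun h i; simp only [Pi.add_apply] at h2; omega

end Apery

section Sorting
variable {d : ℕ} {lt : (Fin d → ℕ) → (Fin d → ℕ) → Prop}

lemma mo_r_trans (hlt : IsMonomialOrder d lt) :
    Transitive (fun x y : Fin d → ℕ => x = y ∨ lt x y) := by
  rintro a b c (rfl | hab) (rfl | hbc)
  · exact Or.inl rfl
  · exact Or.inr hbc
  · exact Or.inr hab
  · exact Or.inr (hlt.2.1 _ _ _ hab hbc)

lemma mo_r_antisymm (hlt : IsMonomialOrder d lt) {x y : Fin d → ℕ}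
    (h1 : x = y ∨ lt x y) (h2 : y = x ∨ lt y x) : x = y := by
  rcases h1 with rfl | h1
  · rfl
  rcases h2 with rfl | h2
  · rfl
  · exact absurd h2 (mo_asymm hlt h1)

lemma exists_sorted_list (hlt : IsMonomialOrder d lt) {X : Set (Fin d → ℕ)} (hX : X.Finite) :
    ∃ L : List (Fin d → ℕ), L.length = X.ncard ∧ L.Nodup ∧ (∀ x, x ∈ L ↔ x ∈ X) ∧
      L.Pairwise (fun x y => x = y ∨ lt x y) := by
  classical
  letI : DecidableRel (fun x y : Fin d → ℕ => x = y ∨ lt x y) :=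
    Classical.decRel _
  letI : IsTrans (Fin d → ℕ) (fun x y : Fin d → ℕ => x = y ∨ lt x y) :=
    ⟨fun a b c hab hbc => mo_r_trans hlt hab hbc⟩
  letI : Std.Antisymm (fun x y : Fin d → ℕ => x = y ∨ lt x y) :=
    ⟨fun a b h1 h2 => mo_r_antisymm hlt h1 h2⟩
  letI : Std.Total (fun x y : Fin d → ℕ => x = y ∨ lt x y) := by
    refine ⟨fun a b => ?_⟩
    by_cases h : a = b
    · exact Or.inl (Or.inl h)
    · rcases hlt.2.2.1 a b h with h' | h'
      · exact Or.inl (Or.inr h')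
      · exact Or.inr (Or.inr h')
  refine ⟨hX.toFinset.sort _, ?_, Finset.sort_nodup _ _, ?_, Finset.pairwise_sort _ _⟩
  · rw [Finset.length_sort, ← Set.ncard_eq_toFinset_card X hX]
  · intro x
    rw [Finset.mem_sort, Set.Finite.mem_toFinset]

lemma sorted_getD_lt (hlt : IsMonomialOrder d lt) {L : List (Fin d → ℕ)} (hnd : L.Nodup)
    (hs : L.Pairwise (fun x y => x = y ∨ lt x y)) {i j : ℕ} (hij : i < j) (hj : j < L.length) :
    lt (L.getD i 0) (L.getD j 0) := by
  have hi : i < L.length := lt_trans hij hj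
  rw [List.getD_eq_getElem _ _ hi, List.getD_eq_getElem _ _ hj]
  have h5 := hs.rel_get_of_lt (a := ⟨i, hi⟩) (b := ⟨j, hj⟩) hij
  simp only [List.get_eq_getElem] at h5
  rcases h5 with h | h
  · exact absurd (hnd.getElem_inj_iff.mp h) (Nat.ne_of_lt hij)
  · exact h

lemma sorted_getD_mem {L : List (Fin d → ℕ)} {i : ℕ} (hi : i < L.length) :
    L.getD i 0 ∈ L := by
  rw [List.getD_eq_getElem _ _ hi]
  exact List.getElem_mem hi

lemma sorted_getD_last (hlt : IsMonomialOrder d lt) {X : Set (Fin d → ℕ)} {L : List (Fin d → ℕ)}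
    (hnd : L.Nodup) (hs : L.Pairwise (fun x y => x = y ∨ lt x y)) (hmem : ∀ x, x ∈ L ↔ x ∈ X)
    {y : Fin d → ℕ} (hy : y ∈ X) (hmax : ∀ x ∈ X, x = y ∨ lt x y) :
    L.getD (L.length - 1) 0 = y := by
  obtain ⟨j, hj, hjy⟩ := List.mem_iff_getElem.mp ((hmem y).mpr hy)
  have hlen : 0 < L.length := lt_of_le_of_lt (Nat.zero_le j) hj
  rcases eq_or_lt_of_le (Nat.le_sub_one_of_lt hj) with he | hlt'
  · subst he
    rw [List.getD_eq_getElem _ _ hj]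
    exact hjy
  · exfalso
    have h1 : lt (L.getD j 0) (L.getD (L.length - 1) 0) :=
      sorted_getD_lt hlt hnd hs hlt' (by omega)
    have h2 : L.getD j 0 = y := by rw [List.getD_eq_getElem _ _ hj]; exact hjy
    rw [h2] at h1
    have h3 : L.getD (L.length - 1) 0 ∈ X := (hmem _).mp (sorted_getD_mem (by omega))
    rcases hmax _ h3 with h4 | h4
    · rw [h4] at h1; exact hlt.1 _ h1
    · exact hlt.1 _ (hlt.2.1 _ _ _ h1 h4)

lemma sorted_getD_head (hlt : IsMonomialOrder d lt) {X : Set (Fin d → ℕ)} {L : List (Fin d → ℕ)}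
    (hnd : L.Nodup) (hs : L.Pairwise (fun x y => x = y ∨ lt x y)) (hmem : ∀ x, x ∈ L ↔ x ∈ X)
    {y : Fin d → ℕ} (hy : y ∈ X) (hmin : ∀ x ∈ X, x = y ∨ lt y x) :
    L.getD 0 0 = y := by
  obtain ⟨j, hj, hjy⟩ := List.mem_iff_getElem.mp ((hmem y).mpr hy)
  rcases Nat.eq_zero_or_pos j with rfl | hj0
  · rw [List.getD_eq_getElem _ _ hj]; exact hjy
  · exfalso
    have h1 : lt (L.getD 0 0) (L.getD j 0) := sorted_getD_lt hlt hnd hs hj0 hj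
    have h2 : L.getD j 0 = y := by rw [List.getD_eq_getElem _ _ hj]; exact hjy
    rw [h2] at h1
    have h3 : L.getD 0 0 ∈ X := (hmem _).mp (sorted_getD_mem (by omega))
    rcases hmin _ h3 with h4 | h4
    · rw [h4] at h1; exact hlt.1 _ h1
    · exact hlt.1 _ (hlt.2.1 _ _ _ h1 h4)

end Sorting
section Sym
variable {d : ℕ} {lt : (Fin d → ℕ) → (Fin d → ℕ) → Prop}

lemma sorted_sym (hlt : IsMonomialOrder d lt) {X : Set (Fin d → ℕ)} {L : List (Fin d → ℕ)}
    (hnd : L.Nodup) (hs : L.Pairwise (fun x y => x = y ∨ lt x y)) (hmem : ∀ x, x ∈ L ↔ x ∈ X)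
    {c : Fin d → ℕ} (hc : ∀ x ∈ X, ∃ y ∈ X, x + y = c) {i : ℕ} (hi : i < L.length) :
    L.getD i 0 + L.getD (L.length - 1 - i) 0 = c := by
  classical
  have hkey : ∀ x ∈ X, c - x ∈ X ∧ x + (c - x) = c := by
    intro x hx
    obtain ⟨y, hy, hxy⟩ := hc x hx
    have hyx : y = c - x := by
      funext k; have h2 := congrFun hxy k
      simp only [Pi.add_apply, Pi.sub_apply] at h2 ⊢; omega
    exact ⟨hyx ▸ hy, hyx ▸ hxy⟩
  have hXle : ∀ x ∈ X, x ≤ c := fun x hx => le_of_add_eq (hkey x hx).2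
  set σ : (Fin d → ℕ) → (Fin d → ℕ) := fun x => c - x with hσ
  set L' : List (Fin d → ℕ) := L.reverse.map σ with hL'
  have hlen' : L'.length = L.length := by simp [hL']
  have hmem' : ∀ x, x ∈ L' ↔ x ∈ L := by
    intro x
    simp only [hL', List.mem_map, List.mem_reverse]
    constructor
    · rintro ⟨z, hz, rfl⟩
      exact (hmem _).mpr (hkey z ((hmem z).mp hz)).1
    · intro hx
      have hxX := (hmem x).mp hx
      refine ⟨σ x, (hmem _).mpr (hkey x hxX).1, ?_⟩
      simp only [hσ]
      exact psub_psub (hXle x hxX)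
  have hinj : ∀ x ∈ L.reverse, ∀ y ∈ L.reverse, σ x = σ y → x = y := by
    intro x hx y hy hxy
    have hxX := (hmem x).mp (List.mem_reverse.mp hx)
    have hyX := (hmem y).mp (List.mem_reverse.mp hy)
    rw [← psub_psub (hXle x hxX), ← psub_psub (hXle y hyX)]
    simp only [hσ] at hxy; rw [hxy]
  have hnd' : L'.Nodup := (List.nodup_reverse.mpr hnd).map_on hinj
  have hperm : List.Perm L' L := by
    apply List.perm_of_nodup_nodup_toFinset_eq hnd' hnd
    ext x; simp only [List.mem_toFinset]; exact hmem' x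
  have hsorted' : L'.Pairwise (fun x y => x = y ∨ lt x y) := by
    rw [hL', List.pairwise_map, List.pairwise_reverse]
    apply List.Pairwise.imp_of_mem ?_ hs
    intro a b ha hb hab
    rcases hab with rfl | hab
    · exact Or.inl rfl
    · right
      have haX := (hmem a).mp ha
      have hbX := (hmem b).mp hb
      have hx : a + σ a = b + σ b := by
        rw [(hkey a haX).2, (hkey b hbX).2]
      exact mo_rev hlt hx hab
  letI : Std.Antisymm (fun x y : Fin d → ℕ => x = y ∨ lt x y) :=
    ⟨fun a b h1 h2 => mo_r_antisymm hlt h1 h2⟩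
  have heq : L' = L := List.Perm.eq_of_pairwise' hsorted' hs hperm
  have hj : L.length - 1 - i < L.length := by omega
  have hwmem : L.getD (L.length - 1 - i) 0 ∈ X := (hmem _).mp (sorted_getD_mem hj)
  have h1 : L.getD i 0 = σ (L.getD (L.length - 1 - i) 0) := by
    conv_lhs => rw [← heq]
    rw [List.getD_eq_getElem _ _ (by omega : i < L'.length),
        List.getD_eq_getElem _ _ hj]
    simp only [hL', List.getElem_map, List.getElem_reverse]
  rw [h1]
  simp only [hσ]
  rw [add_comm]
  exact (hkey _ hwmem).2

end Sym
/-- characterization of almost symmetric GNSs of type `t` via an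
arrangement of the reduced Apéry set. -/
theorem statement12 (d : ℕ) (hd : 0 < d) (S : Set (Fin d → ℕ)) (hS : IsGNS S)
    (n : Fin d → ℕ) (hn : n ∈ S) (hn0 : n ≠ 0)
    (lt : (Fin d → ℕ) → (Fin d → ℕ) → Prop) (hlt : IsMonomialOrder d lt)
    (t : ℕ) (ht : 1 ≤ t) :
    (AlmostSymmetric S ∧ typ S = t) ↔
      ∃ (m : ℕ) (a b : ℕ → (Fin d → ℕ)),
        a 0 = 0 ∧
        (∀ i j, i < j → j ≤ m → lt (a i) (a j)) ∧
        (∀ i j, 1 ≤ i → i < j → j ≤ t - 1 → lt (b i) (b j)) ∧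
        Cred S n = a '' Set.Icc 0 m ∪ b '' Set.Icc 1 (t - 1) ∧
        (a '' Set.Icc 0 m) ∩ (b '' Set.Icc 1 (t - 1)) = ∅ ∧
        (2 ≤ t → lt (b (t - 1)) (a m)) ∧
        (∀ i, 1 ≤ i → i ≤ t - 1 → n ≤ b i) ∧
        (∀ i j, 1 ≤ i → i ≤ t - 1 → 1 ≤ j → j ≤ t - 1 → i ≠ j → ¬ leS S (b i) (b j)) ∧
        (∀ i, i ≤ m → a i + a (m - i) = a m) ∧
        (∀ j, 1 ≤ j → j ≤ t - 1 → b j + b (t - j) = a m + n) := by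
  constructor
  · rintro ⟨hAS, htyp⟩
    obtain ⟨f, hf, hall, hPF⟩ := as_char_forward hS hAS
    have hff0 : f - f = (0 : Fin d → ℕ) := by funext i; simp [Pi.sub_apply]
    have hfPF : f ∈ PF S := by rw [hPF]; exact Or.inr rfl
    set Bf : Set (Fin d → ℕ) := {x | x ∉ S ∧ f - x ∉ S} with hBf
    have hfBf : f ∉ Bf := fun h => h.2 (by rw [hff0]; exact hS.1)
    have hBfPF : ∀ p ∈ Bf, p ∈ PF S := by
      intro p hp; rw [hPF]; exact Or.inl hp
    have hPFdiff : PF S \ {f} = Bf := by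
      rw [hPF]; ext x
      simp only [Set.mem_diff, Set.mem_union, Set.mem_singleton_iff]
      constructor
      · rintro ⟨h | h, hne⟩
        · exact h
        · exact absurd h hne
      · intro hx
        exact ⟨Or.inl hx, fun he => hfBf (he ▸ hx)⟩
    set Xb : Set (Fin d → ℕ) := (fun p => p + n) '' Bf with hXb
    set Xa : Set (Fin d → ℕ) := Cred S n \ Xb with hXa
    have hXbC : Xb ⊆ Cred S n := by
      rintro _ ⟨p, hp, rfl⟩; exact pf_add_mem_Cred hn hn0 (hBfPF p hp)
    have hCredbox : Cred S n ⊆ {x | x ≤ f + n} := by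
      rintro w ⟨hwAp, h, hhS, hwle⟩
      exact le_trans hwle (add_le_add_left (hall h hhS) n)
    have hCredFin : (Cred S n).Finite := (box_finite (f + n)).subset hCredbox
    have hfnCred : f + n ∈ Cred S n := pf_add_mem_Cred hn hn0 hfPF
    have hfnXa : f + n ∈ Xa := by
      refine ⟨hfnCred, ?_⟩
      rintro ⟨p, hp, he⟩
      exact hfBf (add_right_cancel he ▸ hp)
    have h0Cred : (0 : Fin d → ℕ) ∈ Cred S n :=
      ⟨zero_mem_Ap hS hn0, f, hf, zero_le⟩
    have h0Xa : (0 : Fin d → ℕ) ∈ Xa := by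
      refine ⟨h0Cred, ?_⟩
      rintro ⟨p, hp, he⟩
      apply hn0; funext i
      have h2 := congrFun he i
      simp only [Pi.add_apply, Pi.zero_apply] at h2 ⊢; omega
    -- symmetric pairing on Xa
    have hsymXa : ∀ w ∈ Xa, ∃ v ∈ Xa, w + v = f + n := by
      rintro w ⟨hwCred, hwXb⟩
      have hwle : w ≤ f + n := hCredbox hwCred
      obtain ⟨⟨hwS, hwAp2⟩, -⟩ := hwCred
      set v : Fin d → ℕ := f + n - w with hv
      have hadd : w + v = f + n := padd_psub hwle
      have hvS : v ∈ S := by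
        by_contra hvS
        have hvf : v ≤ f := hall v hvS
        have hw_eq : w = (f - v) + n := by
          funext i
          have h2 := congrFun hadd i
          have h3 : v i ≤ f i := hvf i
          have h4 : w i ≤ f i + n i := hwle i
          simp only [Pi.add_apply, Pi.sub_apply] at h2 h4 ⊢
          omega
        have hfv : f - v ∉ S := fun hc => hwAp2 ⟨f - v, hc, hw_eq.symm⟩
        have h5 : f - (f - v) = v := psub_psub hvf
        exact hwXb ⟨f - v, ⟨hfv, fun hc => hvS (h5 ▸ hc)⟩, hw_eq.symm⟩
      have hvAp : v ∈ Ap S n := by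
        refine ⟨hvS, ?_⟩
        rintro ⟨u, hu, hun⟩
        have h6 : (w + u) + n = f + n := by
          rw [add_assoc, hun, hadd]
        have h7 : w + u = f := add_right_cancel h6
        exact hf (h7 ▸ hS.2.1 w u hwS hu)
      have hvle : v ≤ f + n := le_of_add_eq (by rw [add_comm]; exact hadd)
      have hvXb : v ∉ Xb := by
        rintro ⟨p, hp, he⟩
        have he' : p + n = v := he
        have h8 : (w + p) + n = f + n := by
          rw [add_assoc, he', hadd]
        have h9 : w + p = f := add_right_cancel h8
        have h10 : w = f - p := by
          funext i
          have h2 := congrFun h9 i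
          simp only [Pi.add_apply, Pi.sub_apply] at h2 ⊢
          omega
        exact hp.2 (h10 ▸ hwS)
      exact ⟨v, ⟨⟨hvAp, f, hf, hvle⟩, hvXb⟩, hadd⟩
    -- symmetric pairing on Xb
    have hsymXb : ∀ w ∈ Xb, ∃ v ∈ Xb, w + v = (f + n) + n := by
      rintro _ ⟨p, hp, rfl⟩
      have hpf : p ≤ f := hall p hp.1
      refine ⟨(f - p) + n, ⟨f - p, ⟨hp.2, ?_⟩, rfl⟩, ?_⟩
      · rw [psub_psub hpf]; exact hp.1
      · have h11 : p + (f - p) = f := padd_psub hpf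
        calc (p + n) + ((f - p) + n) = (p + (f - p)) + (n + n) := by ring
          _ = (f + n) + n := by rw [h11]; ring
    -- cardinality of Xb
    have hinjadd : Set.InjOn (fun p : Fin d → ℕ => p + n) Bf := by
      intro x _ y _ h
      simpa using add_right_cancel (a := x) (b := n) (c := y) h
    have hXbcard : Xb.ncard = t - 1 := by
      rw [hXb, Set.ncard_image_of_injOn hinjadd, ← hPFdiff]
      have h12 := Set.ncard_diff_singleton_add_one hfPF (PF_finite hS)
      have h13 : (PF S).ncard = t := htyp
      omega
    have hXaFin : Xa.Finite := hCredFin.subset (Set.diff_subset)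
    have hXbFin : Xb.Finite := hCredFin.subset hXbC
    obtain ⟨La, hLalen, hLand, hLamem, hLas⟩ := exists_sorted_list hlt hXaFin
    obtain ⟨Lb, hLblen, hLbnd, hLbmem, hLbs⟩ := exists_sorted_list hlt hXbFin
    have hXane : Xa.Nonempty := ⟨0, h0Xa⟩
    have hXapos : 0 < Xa.ncard := (Set.ncard_pos hXaFin).mpr hXane
    set m := Xa.ncard - 1 with hm
    have hLam : La.length = m + 1 := by rw [hLalen]; omega
    have hLbm : Lb.length = t - 1 := by rw [hLblen, hXbcard]
    have hmaxXa : ∀ x ∈ Xa, x = f + n ∨ lt x (f + n) := by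
      intro x hx
      rcases eq_or_ne x (f + n) with he | hne
      · exact Or.inl he
      · exact Or.inr (mo_lt_of_le_ne hlt (hCredbox hx.1) hne)
    have hlastm : La.getD m 0 = f + n := by
      have h14 : La.length - 1 = m := by omega
      rw [← h14]
      exact sorted_getD_last hlt hLand hLas hLamem hfnXa hmaxXa
    refine ⟨m, fun i => La.getD i 0, fun i => Lb.getD (i - 1) 0, ?_, ?_, ?_, ?_, ?_, ?_, ?_, ?_, ?_, ?_⟩
    · -- a 0 = 0
      apply sorted_getD_head hlt hLand hLas hLamem h0Xa
      intro x hx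
      rcases eq_or_ne x 0 with he | hne
      · exact Or.inl he
      · exact Or.inr (hlt.2.2.2.2 x hne)
    · intro i j hij hjm
      exact sorted_getD_lt hlt hLand hLas hij (by omega)
    · intro i j h1 hij hj
      exact sorted_getD_lt hlt hLbnd hLbs (by omega) (by omega)
    · -- Cred = union
      have haimg : (fun i => La.getD i 0) '' Set.Icc 0 m = Xa := by
        ext x
        constructor
        · rintro ⟨i, hi, rfl⟩
          have hi' := (Set.mem_Icc.mp hi).2
          exact (hLamem _).mp (sorted_getD_mem (by omega))
        · intro hx
          obtain ⟨j, hj, hjx⟩ := List.mem_iff_getElem.mp ((hLamem x).mpr hx)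
          exact ⟨j, Set.mem_Icc.mpr ⟨Nat.zero_le j, by omega⟩,
            by show La.getD j 0 = x; rw [List.getD_eq_getElem _ _ hj]; exact hjx⟩
      have hbimg : (fun i => Lb.getD (i - 1) 0) '' Set.Icc 1 (t - 1) = Xb := by
        ext x
        constructor
        · rintro ⟨i, hi, rfl⟩
          have hi' := Set.mem_Icc.mp hi
          exact (hLbmem _).mp (sorted_getD_mem (by omega))
        · intro hx
          obtain ⟨j, hj, hjx⟩ := List.mem_iff_getElem.mp ((hLbmem x).mpr hx)
          refine ⟨j + 1, Set.mem_Icc.mpr ⟨by omega, by omega⟩, ?_⟩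
          show Lb.getD (j + 1 - 1) 0 = x
          simp only [Nat.add_sub_cancel]
          rw [List.getD_eq_getElem _ _ hj]; exact hjx
      rw [haimg, hbimg, hXa, Set.diff_union_of_subset hXbC]
    · -- disjoint
      have haimg : (fun i => La.getD i 0) '' Set.Icc 0 m ⊆ Xa := by
        rintro x ⟨i, hi, rfl⟩
        have hi' := (Set.mem_Icc.mp hi).2
        exact (hLamem _).mp (sorted_getD_mem (by omega))
      have hbimg : (fun i => Lb.getD (i - 1) 0) '' Set.Icc 1 (t - 1) ⊆ Xb := by
        rintro x ⟨i, hi, rfl⟩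
        have hi' := Set.mem_Icc.mp hi
        exact (hLbmem _).mp (sorted_getD_mem (by omega))
      rw [Set.eq_empty_iff_forall_notMem]
      rintro x ⟨hx1, hx2⟩
      exact (haimg hx1).2 (hbimg hx2)
    · -- b (t-1) < a m
      intro h2t
      have hb : Lb.getD (t - 1 - 1) 0 ∈ Xb := (hLbmem _).mp (sorted_getD_mem (by omega))
      obtain ⟨p, hp, hpe⟩ := hb
      have hpe' : p + n = Lb.getD (t - 1 - 1) 0 := hpe
      show lt (Lb.getD (t - 1 - 1) 0) (La.getD m 0)
      rw [hlastm, ← hpe']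
      refine mo_lt_of_le_ne hlt (add_le_add_left (hall p hp.1) n) ?_
      intro hc
      exact hfBf (add_right_cancel hc ▸ hp)
    · -- n ≤ b i
      intro i h1 hi
      have hb : Lb.getD (i - 1) 0 ∈ Xb := (hLbmem _).mp (sorted_getD_mem (by omega))
      obtain ⟨p, hp, hpe⟩ := hb
      have hpe' : p + n = Lb.getD (i - 1) 0 := hpe
      show n ≤ Lb.getD (i - 1) 0
      rw [← hpe']
      exact le_add_self
    · -- incomparability
      intro i j h1i hi h1j hj hij
      have hbi : Lb.getD (i - 1) 0 ∈ Xb := (hLbmem _).mp (sorted_getD_mem (by omega))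
      have hbj : Lb.getD (j - 1) 0 ∈ Xb := (hLbmem _).mp (sorted_getD_mem (by omega))
      obtain ⟨p, hp, hpe⟩ := hbi
      obtain ⟨q, hq, hqe⟩ := hbj
      have hpe' : p + n = Lb.getD (i - 1) 0 := hpe
      have hqe' : q + n = Lb.getD (j - 1) 0 := hqe
      rintro ⟨s, hs, hse⟩
      have hse' : (p + n) + s = q + n := by rw [hpe', hqe']; exact hse
      have hse'' : (p + s) + n = q + n := by rw [← hse']; ring
      have hqs : q = p + s := (add_right_cancel hse'').symm
      rcases eq_or_ne s 0 with rfl | hs0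
      · rw [add_zero] at hqs
        have heq2 : Lb.getD (i - 1) 0 = Lb.getD (j - 1) 0 := by rw [← hpe', ← hqe', hqs]
        rcases Nat.lt_or_ge (i - 1) (j - 1) with hlt' | hge
        · have h20 := sorted_getD_lt hlt hLbnd hLbs hlt' (by omega)
          rw [heq2] at h20
          exact hlt.1 _ h20
        · have hlt'' : j - 1 < i - 1 := by omega
          have h20 := sorted_getD_lt hlt hLbnd hLbs hlt'' (by omega)
          rw [heq2] at h20
          exact hlt.1 _ h20
      · exact hq.1 (hqs ▸ (hBfPF p hp).2 s hs hs0)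
    · -- a-symmetry
      intro i him
      have h1 : i < La.length := by omega
      have h2 := sorted_sym hlt hLand hLas hLamem (c := f + n) hsymXa h1
      have h3 : La.length - 1 - i = m - i := by omega
      rw [h3] at h2
      show La.getD i 0 + La.getD (m - i) 0 = La.getD m 0
      rw [hlastm]; exact h2
    · -- b-symmetry
      intro j h1j hj
      have h1 : j - 1 < Lb.length := by omega
      have h2 := sorted_sym hlt hLbnd hLbs hLbmem (c := (f + n) + n) hsymXb h1
      have h3 : Lb.length - 1 - (j - 1) = (t - j) - 1 := by omega
      rw [h3] at h2
      show Lb.getD (j - 1) 0 + Lb.getD ((t - j) - 1) 0 = La.getD m 0 + n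
      rw [hlastm]; exact h2
  · rintro ⟨m, a, b, ha0, haMono, hbMono, hCredEq, hDisj, hbta, hnb, hbinc, hsyma, hsymb⟩
    have hamem : ∀ i, i ≤ m → a i ∈ Cred S n := by
      intro i hi
      rw [hCredEq]
      exact Or.inl ⟨i, Set.mem_Icc.mpr ⟨Nat.zero_le i, hi⟩, rfl⟩
    have hbmem : ∀ i, 1 ≤ i → i ≤ t - 1 → b i ∈ Cred S n := by
      intro i h1 h2
      rw [hCredEq]
      exact Or.inr ⟨i, Set.mem_Icc.mpr ⟨h1, h2⟩, rfl⟩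
    have hCS : Cred S n ⊆ S := fun x hx => hx.1.1
    have hainj : ∀ i, i ≤ m → a i = a 0 → i = 0 := by
      intro i hi he
      by_contra h0
      have h3 := haMono 0 i (by omega) hi
      rw [he] at h3
      exact hlt.1 _ h3
    obtain ⟨h0gap, h0gapS, -⟩ := (hamem 0 (Nat.zero_le m)).2
    have hamCred := hamem m le_rfl
    have hkeymax : ∀ f', f' ∉ S → (∀ y, y ∉ S → f' ≤ y → f' = y) → a m = f' + n := by
      intro f' hf' hmax
      have hfPF' : f' ∈ PF S := maxgap_mem_PF hS hf' hmax
      have hfC : f' + n ∈ Cred S n := pf_add_mem_Cred hn hn0 hfPF'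
      rw [hCredEq] at hfC
      rcases hfC with ⟨i, hi, hie⟩ | ⟨j, hj, hje⟩
      · have hi' := (Set.mem_Icc.mp hi).2
        have h4 := hsyma i hi'
        have hie' : a i = f' + n := hie
        rw [hie'] at h4
        have hnotS : f' + a (m - i) ∉ S := by
          intro hc
          exact hamCred.1.2 ⟨f' + a (m - i), hc, by rw [← h4]; ring⟩
        have heq' := hmax _ hnotS (self_le_add_right f' (a (m - i)))
        have hz : a (m - i) = 0 := by
          have h5 : f' + 0 = f' + a (m - i) := by rw [add_zero]; exact heq'
          exact (add_left_cancel h5).symm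
        have h6 : m - i = 0 := hainj (m - i) (by omega) (by rw [hz, ha0])
        have h7 : i = m := by omega
        rw [← hie', h7]
      · exfalso
        have hj' := Set.mem_Icc.mp hj
        have h5 := hsymb j hj'.1 hj'.2
        have hje' : b j = f' + n := hje
        rw [hje'] at h5
        have htj1 : 1 ≤ t - j := by omega
        have htj2 : t - j ≤ t - 1 := by omega
        have hnbj := hnb (t - j) htj1 htj2
        have hu : (f' + (b (t - j) - n)) + n = a m := by
          have h6 : (f' + b (t - j)) + n = a m + n := by rw [← h5]; ring
          have h7 : f' + b (t - j) = a m := add_right_cancel h6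
          rw [← h7, add_assoc, sub_add_cancel_pi hnbj]
        have huS : f' + (b (t - j) - n) ∉ S := fun hc => hamCred.1.2 ⟨_, hc, hu⟩
        have heq' := hmax _ huS (self_le_add_right _ _)
        have hz : b (t - j) - n = 0 := by
          have h8 : f' + 0 = f' + (b (t - j) - n) := by rw [add_zero]; exact heq'
          exact (add_left_cancel h8).symm
        have hbn : b (t - j) = n := by
          funext k
          have h8 := congrFun hz k
          have h9 : n k ≤ b (t - j) k := hnbj k
          simp only [Pi.sub_apply, Pi.zero_apply] at h8
          omega
        exact n_not_mem_Ap hS (hbn ▸ (hbmem (t - j) htj1 htj2).1)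
    obtain ⟨f, hfS, hf0le, hfmax⟩ := exists_maxgap_above hS h0gapS
    have ham : a m = f + n := hkeymax f hfS hfmax
    have hall : ∀ x, x ∉ S → x ≤ f := by
      intro x hx
      obtain ⟨f', hf', hxf', hmax'⟩ := exists_maxgap_above hS hx
      have h1 : f' + n = f + n := by rw [← hkeymax f' hf' hmax', ham]
      have h2 : f' = f := add_right_cancel h1
      exact h2 ▸ hxf'
    have hfPF : f ∈ PF S := maxgap_mem_PF hS hfS hfmax
    have hG7 : ∀ j, 1 ≤ j → j ≤ t - 1 → ∃ p, (p ∈ PF S ∧ p ≠ f) ∧ p + n = b j := by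
      intro j h1j hj
      have hbC := hbmem j h1j hj
      have hnbj := hnb j h1j hj
      have hpn : (b j - n) + n = b j := sub_add_cancel_pi hnbj
      have hpS : b j - n ∉ S := fun hc => hbC.1.2 ⟨b j - n, hc, hpn⟩
      obtain ⟨q, hqPF, s, hsS, hpsq⟩ := exists_pf_above hS hpS
      have hqC : q + n ∈ Cred S n := pf_add_mem_Cred hn hn0 hqPF
      rw [hCredEq] at hqC
      rcases hqC with ⟨i, hi, hie⟩ | ⟨k, hk, hke⟩
      · exfalso
        have hi' := (Set.mem_Icc.mp hi).2
        have hie' : a i = q + n := hie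
        have h4 := hsyma i hi'
        rw [hie'] at h4
        have h6 : (q + a (m - i)) + n = a m := by rw [← h4]; ring
        have hqf : q = f := by
          rcases eq_or_ne (a (m - i)) 0 with hz | hz
          · rw [hz, add_zero, ham] at h6
            exact add_right_cancel h6
          · exfalso
            have h8 : q + a (m - i) ∈ S := hqPF.2 _ (hCS (hamem (m - i) (by omega))) hz
            exact hamCred.1.2 ⟨_, h8, h6⟩
        have h9 : b j + s = a m := by
          rw [← hpn, ham, ← hqf, ← hpsq]; ring
        have h10 := hsymb j h1j hj
        have h11 : b j + (s + n) = b j + b (t - j) := by rw [h10, ← h9]; ring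
        have h12 : b (t - j) = s + n := (add_left_cancel h11).symm
        exact (hbmem (t - j) (by omega) (by omega)).1.2 ⟨s, hsS, h12.symm⟩
      · have hk' := Set.mem_Icc.mp hk
        have hke' : b k = q + n := hke
        rcases eq_or_ne j k with rfl | hjk
        · have hpq : b j - n = q := add_right_cancel (by rw [hpn, hke'] : (b j - n) + n = q + n)
          have hpf : q ≠ f := by
            intro he
            have hbeq : b j = a m := by rw [hke', he, ham]
            have hmemA : a m ∈ a '' Set.Icc 0 m := ⟨m, Set.mem_Icc.mpr ⟨Nat.zero_le m, le_rfl⟩, rfl⟩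
            have hmemB : b j ∈ b '' Set.Icc 1 (t - 1) := ⟨j, Set.mem_Icc.mpr ⟨h1j, hj⟩, rfl⟩
            rw [hbeq] at hmemB
            have hint : a m ∈ a '' Set.Icc 0 m ∩ b '' Set.Icc 1 (t - 1) := ⟨hmemA, hmemB⟩
            rw [hDisj] at hint
            exact Set.notMem_empty _ hint
          exact ⟨q, ⟨hqPF, hpf⟩, hke'.symm⟩
        · exfalso
          apply hbinc j k h1j hj hk'.1 hk'.2 hjk
          refine ⟨s, hsS, ?_⟩
          rw [hke', ← hpsq, show (b j - n + s) + n = (b j - n + n) + s by ring, hpn]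
    have hG8 : ∀ p, p ∈ PF S → p ≠ f → ∃ j, 1 ≤ j ∧ j ≤ t - 1 ∧ b j = p + n := by
      intro p hpPF hpf
      have hpC : p + n ∈ Cred S n := pf_add_mem_Cred hn hn0 hpPF
      rw [hCredEq] at hpC
      rcases hpC with ⟨i, hi, hie⟩ | ⟨k, hk, hke⟩
      · exfalso
        have hi' := (Set.mem_Icc.mp hi).2
        have hie' : a i = p + n := hie
        have h4 := hsyma i hi'
        rw [hie'] at h4
        have h6 : (p + a (m - i)) + n = a m := by rw [← h4]; ring
        rcases eq_or_ne (a (m - i)) 0 with hz | hz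
        · have h7 : m - i = 0 := hainj (m - i) (by omega) (by rw [hz, ha0])
          have h8 : i = m := by omega
          apply hpf
          have h9 : p + n = f + n := by rw [← hie', h8, ham]
          exact add_right_cancel h9
        · have h8 : p + a (m - i) ∈ S := hpPF.2 _ (hCS (hamem (m - i) (by omega))) hz
          exact hamCred.1.2 ⟨_, h8, h6⟩
      · have hk' := Set.mem_Icc.mp hk
        exact ⟨k, hk'.1, hk'.2, hke⟩
    have hbinjOn : Set.InjOn b (Set.Icc 1 (t - 1)) := by
      intro x hx y hy he
      have hx' := Set.mem_Icc.mp hx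
      have hy' := Set.mem_Icc.mp hy
      by_contra hne
      rcases Nat.lt_or_ge x y with h1 | h1
      · have h2 := hbMono x y hx'.1 h1 hy'.2
        rw [he] at h2
        exact hlt.1 _ h2
      · have h3 : y < x := by omega
        have h2 := hbMono y x hy'.1 h3 hx'.2
        rw [he] at h2
        exact hlt.1 _ h2
    have hPFim : (fun p : Fin d → ℕ => p + n) '' (PF S \ {f}) = b '' Set.Icc 1 (t - 1) := by
      ext x
      constructor
      · rintro ⟨p, ⟨hpPF, hpf⟩, rfl⟩
        obtain ⟨j, h1, h2, he⟩ := hG8 p hpPF hpf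
        exact ⟨j, Set.mem_Icc.mpr ⟨h1, h2⟩, he⟩
      · rintro ⟨j, hj, rfl⟩
        have hj' := Set.mem_Icc.mp hj
        obtain ⟨p, hp, he⟩ := hG7 j hj'.1 hj'.2
        exact ⟨p, ⟨hp.1, hp.2⟩, he⟩
    have hcard1 : (PF S \ {f}).ncard = t - 1 := by
      have h1 : ((fun p : Fin d → ℕ => p + n) '' (PF S \ {f})).ncard = (PF S \ {f}).ncard :=
        Set.ncard_image_of_injOn (fun x _ y _ h => by simpa using add_right_cancel (a := x) (b := n) (c := y) h)
      rw [hPFim, Set.ncard_image_of_injOn hbinjOn, ← Finset.coe_Icc, Set.ncard_coe_finset,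
        Nat.card_Icc] at h1
      omega
    have htypt : typ S = t := by
      have h2 := Set.ncard_diff_singleton_add_one hfPF (PF_finite hS)
      have h3 : typ S = (PF S).ncard := rfl
      omega
    have hPFeq : PF S = {x | x ∉ S ∧ f - x ∉ S} ∪ {f} := by
      ext x
      simp only [Set.mem_union, Set.mem_setOf_eq, Set.mem_singleton_iff]
      constructor
      · intro hp
        rcases eq_or_ne x f with he | hne
        · exact Or.inr he
        · left
          refine ⟨hp.1, fun hc => ?_⟩
          rcases eq_or_ne (f - x) 0 with hz | hz
          · exact hne (psub_eq_zero (hall x hp.1) hz)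
          · have h4 := hp.2 _ hc hz
            rw [padd_psub (hall x hp.1)] at h4
            exact hfS h4
      · intro hp
        rcases hp with ⟨hx1, hx2⟩ | he
        · obtain ⟨q, hqPF, s, hsS, hxsq⟩ := exists_pf_above hS hx1
          rcases eq_or_ne q f with he | hne
          · exfalso
            apply hx2
            have h5 : f - x = s := by
              funext k
              have h6 := congrFun hxsq k
              have h7 : x k ≤ f k := hall x hx1 k
              rw [he] at h6
              simp only [Pi.add_apply, Pi.sub_apply] at h6 ⊢
              omega
            rw [h5]; exact hsS
          · obtain ⟨j, h1j, hj, hje⟩ := hG8 q hqPF hne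
            have h10 := hsymb j h1j hj
            obtain ⟨q', hq', he'⟩ := hG7 (t - j) (by omega) (by omega)
            have hqq' : q + q' = f := by
              have h11 : (q + n) + (q' + n) = (f + n) + n := by
                rw [← hje, he', ← ham]; exact h10
              have h12 : (q + q') + (n + n) = f + (n + n) := by
                rw [show (q + q') + (n + n) = (q + n) + (q' + n) by ring, h11]; ring
              exact add_right_cancel h12
            rcases eq_or_ne s 0 with rfl | hs0
            · rw [add_zero] at hxsq
              exact hxsq ▸ hqPF
            · exfalso
              have h13 : q' + s ∈ S := (hq'.1).2 s hsS hs0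
              apply hx2
              have h14 : f - x = q' + s := by
                have h15 : x + (q' + s) = f := by rw [← hqq', ← hxsq]; ring
                funext k
                have h16 := congrFun h15 k
                simp only [Pi.add_apply, Pi.sub_apply] at h16 ⊢
                omega
              rw [h14]; exact h13
        · exact he ▸ hfPF
    exact ⟨⟨f, hfS, as_char_backward hS hfS hall hPFeq⟩, htypt⟩
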